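/- A shift space X over a finitely generated free group is a shift of finite type if and only if it has the G-shadowing property: for every ε > 0 there exists δ > 0 such that every δ-G-pseudo-orbit in X is ε-shadowed by a point of X. -/

import Mathlib

/-- Reduced words over the alphabet `S` of generators and inverses (`ι` = formal inverse). -/
def Reduced {S : Type*} (ι : S → S) (l : List S) : Prop :=
  l.Chain' (fun a b => b ≠ ι a)

/-- Left multiplication of a reduced word by a letter, with cancellation. -/
def consRed {S : Type*} [DecidableEq S] (ι : S → S) (i : S) : List S → List S
  | [] => [i]
  | a :: t => if a = ι i then t else i :: a :: t

theorem reduced_consRed {S : Type*} [DecidableEq S] (ι : S → S) (i : S) {l : List S}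
    (h : Reduced ι l) : Reduced ι (consRed ι i l) := by
  cases l with
  | nil => simp [consRed, Reduced, List.Chain']
  | cons a t =>
    have h' : List.Chain' (fun a b => b ≠ ι a) (a :: t) := h
    by_cases hc : a = ι i
    · simpa [consRed, hc, Reduced, List.Chain'] using h'.tail
    · simp only [consRed, if_neg hc]
      exact List.isChain_cons_cons.mpr ⟨hc, h'⟩

/-- Multiplication of reduced words: multiply the letters of `v` onto `u` from the right. -/
def mulRed {S : Type*} [DecidableEq S] (ι : S → S) (v u : List S) : List S :=
  v.foldr (consRed ι) u

theorem reduced_mulRed {S : Type*} [DecidableEq S] (ι : S → S) (v : List S) {u : List S}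
    (h : Reduced ι u) : Reduced ι (mulRed ι v u) := by
  induction v with
  | nil => exact h
  | cons a t ih => exact reduced_consRed ι a ih

/-- The reduced words of the free group with inverse map `ι` on the alphabet `S`. -/
abbrev Word {S : Type*} (ι : S → S) := {l : List S // Reduced ι l}

/-- The length of a reduced word. -/
def wlen {S : Type*} {ι : S → S} (u : Word ι) : ℕ := u.1.length

/-- The empty word (identity element). -/
def emptyWord {S : Type*} (ι : S → S) : Word ι := ⟨[], List.isChain_nil⟩

/-- A single-letter word. -/
def word1 {S : Type*} (ι : S → S) (i : S) : Word ι := ⟨[i], List.isChain_singleton i⟩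

/-- The group product `v · u` as a reduced word. -/
def wmul {S : Type*} [DecidableEq S] {ι : S → S} (v : List S) (u : Word ι) : Word ι :=
  ⟨mulRed ι v u.1, reduced_mulRed ι v u.2⟩

/-- The product of two reduced words. -/
def wordMul {S : Type*} [DecidableEq S] {ι : S → S} (u v : Word ι) : Word ι :=
  wmul u.1 v

/-- The shift `σ_v`: `σ_v(x)(u) = x(vu)`. -/
def shiftBy {S A : Type*} [DecidableEq S] {ι : S → S} (v : List S) (x : Word ι → A) :
    Word ι → A :=
  fun u => x (wmul v u)

/-- The metric on `𝒜^G`: `d(x,y) = inf({2^{-n} : x, y agree on all words of length < n})`. -/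
noncomputable def shiftDist {S A : Type*} {ι : S → S} (x y : Word ι → A) : ℝ :=
  sInf {r | ∃ n : ℕ, (∀ u : Word ι, wlen u < n → x u = y u) ∧ r = (2 : ℝ) ^ (-(n : ℤ))}

/-- `B` (viewed as an `m`-block, i.e. only through its values on words of length `< m`)
occurs in `x`. -/
def occursIn {S A : Type*} [DecidableEq S] {ι : S → S} (x : Word ι → A) (m : ℕ)
    (B : Word ι → A) : Prop :=
  ∃ u : Word ι, ∀ v : Word ι, wlen v < m → shiftBy u.1 x v = B v

/-- The shift space determined by a set `𝓕` of forbidden blocks (an element `(m, B)`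
represents the `m`-block obtained by restricting `B` to words of length `< m`). -/
def shiftOf {S A : Type*} [DecidableEq S] (ι : S → S) (𝓕 : Set (ℕ × (Word ι → A))) :
    Set (Word ι → A) :=
  {x | ∀ p ∈ 𝓕, ¬ occursIn x p.1 p.2}

/-- A shift space: a subset of the full shift cut out by a set of forbidden blocks. -/
def IsShiftSpace {S A : Type*} [DecidableEq S] (ι : S → S) (X : Set (Word ι → A)) : Prop :=
  ∃ 𝓕 : Set (ℕ × (Word ι → A)), X = shiftOf ι 𝓕

/-- A shift of finite type: cut out by finitely many forbidden blocks. -/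
def IsSFT {S A : Type*} [DecidableEq S] (ι : S → S) (X : Set (Word ι → A)) : Prop :=
  ∃ 𝓕 : Set (ℕ × (Word ι → A)), 𝓕.Finite ∧ X = shiftOf ι 𝓕

section Aux
variable {S A : Type*} [DecidableEq S] {ι : S → S}

theorem reduced_tail {i : S} {t : List S} (h : Reduced ι (i :: t)) : Reduced ι t :=
  (List.isChain_cons.mp h).2

theorem consRed_eq_cons {i : S} {t : List S} (h : Reduced ι (i :: t)) :
    consRed ι i t = i :: t := by
  cases t with
  | nil => rfl
  | cons b r =>
    have hb : b ≠ ι i := (List.isChain_cons_cons.mp h).1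
    simp [consRed, hb]

theorem consRed_cancel (hι : ∀ s, ι (ι s) = s) {l : List S} (h : Reduced ι l) (i : S) :
    consRed ι i (consRed ι (ι i) l) = l := by
  cases l with
  | nil => simp [consRed]
  | cons a t =>
    by_cases ha : a = ι (ι i)
    · rw [hι] at ha
      rw [ha] at h ⊢
      rw [show consRed ι (ι i) (i :: t) = t from by simp [consRed, hι]]
      exact consRed_eq_cons h
    · rw [show consRed ι (ι i) (a :: t) = ι i :: a :: t from by simp [consRed, ha]]
      simp [consRed]

theorem length_consRed (i : S) (l : List S) : (consRed ι i l).length ≤ l.length + 1 := by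
  cases l with
  | nil => simp [consRed]
  | cons a t =>
    by_cases h : a = ι i <;> simp [consRed, h] <;> omega

theorem mulRed_consRed (hι : ∀ s, ι (ι s) = s) (a : S) {w m : List S}
    (hw : Reduced ι w) (hm : Reduced ι m) :
    mulRed ι (consRed ι a w) m = consRed ι a (mulRed ι w m) := by
  cases w with
  | nil => rfl
  | cons b t =>
    by_cases hb : b = ι a
    · subst hb
      have ht : Reduced ι t := reduced_tail hw
      rw [show consRed ι a (ι a :: t) = t from by simp [consRed],
        show mulRed ι (ι a :: t) m = consRed ι (ι a) (mulRed ι t m) from rfl,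
        consRed_cancel hι (reduced_mulRed ι t hm) a]
    · rw [show consRed ι a (b :: t) = a :: b :: t from by simp [consRed, hb]]
      rfl

theorem mulRed_assoc (hι : ∀ s, ι (ι s) = s) {u m : List S} (hu : Reduced ι u)
    (hm : Reduced ι m) :
    ∀ l : List S, mulRed ι (mulRed ι l u) m = mulRed ι l (mulRed ι u m)
  | [] => rfl
  | a :: t => by
    have ih := mulRed_assoc hι hu hm t
    show mulRed ι (consRed ι a (mulRed ι t u)) m = consRed ι a (mulRed ι t (mulRed ι u m))
    rw [mulRed_consRed hι a (reduced_mulRed ι t hu) hm, ih]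

theorem mulRed_nil {l : List S} (h : Reduced ι l) : mulRed ι l [] = l := by
  induction l with
  | nil => rfl
  | cons a t ih =>
    rw [show mulRed ι (a :: t) [] = consRed ι a (mulRed ι t []) from rfl,
      ih (reduced_tail h), consRed_eq_cons h]

theorem wmul_nil (u : Word ι) : wmul u.1 (emptyWord ι) = u :=
  Subtype.ext (mulRed_nil u.2)

theorem wmul_cons (hι : ∀ s, ι (ι s) = s) (u : Word ι) {i : S} {t : List S}
    (h : Reduced ι (i :: t)) :
    wmul u.1 ⟨i :: t, h⟩ = wmul (wordMul u (word1 ι i)).1 ⟨t, reduced_tail h⟩ := by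
  apply Subtype.ext
  show mulRed ι u.1 (i :: t) = mulRed ι (mulRed ι u.1 [i]) t
  rw [mulRed_assoc hι (List.isChain_singleton i) (reduced_tail h) u.1]
  rw [show mulRed ι [i] t = consRed ι i t from rfl, consRed_eq_cons h]

theorem shiftDist_le {x y : Word ι → A} {n : ℕ}
    (h : ∀ u : Word ι, wlen u < n → x u = y u) :
    shiftDist x y ≤ (2 : ℝ) ^ (-(n : ℤ)) := by
  apply csInf_le
  · refine ⟨0, ?_⟩
    rintro r ⟨m, -, rfl⟩
    positivity
  · exact ⟨n, h, rfl⟩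

theorem shiftDist_lt_elim {x y : Word ι → A} {n : ℕ}
    (h : shiftDist x y < (2 : ℝ) ^ (-(n : ℤ))) :
    ∀ u : Word ι, wlen u ≤ n → x u = y u := by
  have hne : {r | ∃ m : ℕ, (∀ u : Word ι, wlen u < m → x u = y u) ∧
      r = (2 : ℝ) ^ (-(m : ℤ))}.Nonempty := ⟨1, 0, fun u hu => absurd hu (by omega), by norm_num⟩
  obtain ⟨r, ⟨m, hm, rfl⟩, hr⟩ := exists_lt_of_csInf_lt hne h
  intro u hu
  apply hm
  have hmn : (n : ℤ) < m := by
    by_contra hc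
    push_neg at hc
    exact absurd hr (not_lt.mpr (zpow_le_zpow_right₀ (by norm_num) (by omega)))
  omega

theorem shiftBy_mem_shiftOf (hι : ∀ s, ι (ι s) = s) {𝓕 : Set (ℕ × (Word ι → A))}
    {x : Word ι → A} (hx : x ∈ shiftOf ι 𝓕) (u : Word ι) :
    shiftBy u.1 x ∈ shiftOf ι 𝓕 := by
  intro p hp hocc
  obtain ⟨w, hw⟩ := hocc
  refine hx p hp ⟨wordMul u w, fun v hv => ?_⟩
  have h1 := hw v hv
  rw [show shiftBy (wordMul u w).1 x v = shiftBy w.1 (shiftBy u.1 x) v from ?_]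
  · exact h1
  · show x (wmul (wordMul u w).1 v) = x (wmul u.1 (wmul w.1 v))
    congr 1
    exact Subtype.ext (mulRed_assoc hι w.2 v.2 u.1)

end Aux


theorem exists_zpow_lt {ε : ℝ} (hε : 0 < ε) : ∃ k : ℕ, (2 : ℝ) ^ (-(k : ℤ)) < ε := by
  obtain ⟨k, hk⟩ := exists_pow_lt_of_lt_one hε (by norm_num : (1 / 2 : ℝ) < 1)
  refine ⟨k, ?_⟩
  rw [zpow_neg, zpow_natCast]
  calc ((2 : ℝ) ^ k)⁻¹ = (1 / 2 : ℝ) ^ k := by rw [one_div, inv_pow]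
    _ < ε := hk

/-- a shift space over a finitely generated free group is a shift of
finite type iff it has the shadowing property: for every `ε > 0` there is `δ > 0`
such that every `δ`-pseudo-orbit `𝒪 : G → X` is `ε`-shadowed by a point of `X`. -/
theorem sft_iff_shadowing {S A : Type*} [DecidableEq S] [Fintype S] [Fintype A]
    (ι : S → S) (hι : ∀ s, ι (ι s) = s) (hιne : ∀ s, ι s ≠ s)
    (X : Set (Word ι → A)) (hX : IsShiftSpace ι X) :
    IsSFT ι X ↔
      ∀ ε > (0 : ℝ), ∃ δ > (0 : ℝ), ∀ 𝒪 : Word ι → (Word ι → A),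
        (∀ u, 𝒪 u ∈ X) →
        (∀ (u : Word ι) (i : S),
          shiftDist (shiftBy [i] (𝒪 u)) (𝒪 (wordMul u (word1 ι i))) < δ) →
        ∃ x ∈ X, ∀ u : Word ι, shiftDist (shiftBy u.1 x) (𝒪 u) < ε := by
  classical
  by_cases hA : Nonempty A
  case neg =>
    have hAe : IsEmpty A := not_nonempty_iff.mp hA
    constructor
    · intro _ ε _
      exact ⟨1, one_pos, fun 𝒪 _ _ => (hAe.false (𝒪 (emptyWord ι) (emptyWord ι))).elim⟩
    · intro _
      exact ⟨∅, Set.finite_empty, by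
        ext x
        exact (hAe.false (x (emptyWord ι))).elim⟩
  obtain ⟨a₀⟩ := hA
  constructor
  · -- SFT implies shadowing
    rintro ⟨𝓕, h𝓕fin, hXeq⟩ ε hε
    obtain ⟨m, hm⟩ : ∃ m, ∀ p ∈ 𝓕, p.1 ≤ m := by
      obtain ⟨m, hm⟩ := (h𝓕fin.image Prod.fst).bddAbove
      exact ⟨m, fun p hp => hm (Set.mem_image_of_mem _ hp)⟩
    obtain ⟨k, hk⟩ := exists_zpow_lt hε
    set N := max m k with hNdef
    have hkN : k ≤ N := le_max_right m k
    refine ⟨(2 : ℝ) ^ (-(N : ℤ)), by positivity, fun 𝒪 h1 h2 => ?_⟩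
    have h2' : ∀ (u : Word ι) (i : S) (v : Word ι), wlen v ≤ N →
        shiftBy [i] (𝒪 u) v = 𝒪 (wordMul u (word1 ι i)) v :=
      fun u i => shiftDist_lt_elim (h2 u i)
    set x : Word ι → A := fun u => 𝒪 u (emptyWord ι) with hxdef
    have key : ∀ t : List S, ∀ h : Reduced ι t, t.length ≤ N → ∀ u : Word ι,
        𝒪 u ⟨t, h⟩ = x (wmul u.1 ⟨t, h⟩) := by
      intro t
      induction t with
      | nil =>
        intro h _ u
        rw [show (⟨[], h⟩ : Word ι) = emptyWord ι from rfl, wmul_nil]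
      | cons i t ih =>
        intro h hlen u
        have ht : t.length ≤ N := by
          simp only [List.length_cons] at hlen; omega
        have e1 : 𝒪 u ⟨i :: t, h⟩ = shiftBy [i] (𝒪 u) ⟨t, reduced_tail h⟩ := by
          show _ = 𝒪 u (wmul [i] ⟨t, reduced_tail h⟩)
          congr 1
          exact Subtype.ext (consRed_eq_cons h).symm
        rw [e1, h2' u i ⟨t, reduced_tail h⟩ ht, ih (reduced_tail h) ht, wmul_cons hι u h]
    refine ⟨x, ?_, ?_⟩
    · rw [hXeq]
      rintro p hp ⟨u, hu⟩
      refine (hXeq ▸ h1 u) p hp ⟨emptyWord ι, fun v hv => ?_⟩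
      have hvN : wlen v ≤ N := by
        have h3 := hm p hp
        have h4 : m ≤ N := le_max_left m k
        omega
      calc shiftBy (emptyWord ι).1 (𝒪 u) v = 𝒪 u v := rfl
        _ = x (wmul u.1 v) := key v.1 v.2 hvN u
        _ = p.2 v := hu v hv
    · intro u
      have hle : shiftDist (shiftBy u.1 x) (𝒪 u) ≤ (2 : ℝ) ^ (-((N + 1 : ℕ) : ℤ)) := by
        apply shiftDist_le
        intro v hv
        have hwv : wlen v = v.1.length := rfl
        exact (key v.1 v.2 (by omega) u).symm
      refine lt_of_le_of_lt (le_trans hle (zpow_le_zpow_right₀ (by norm_num) ?_)) hk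
      push_cast
      omega
  · -- shadowing implies SFT
    intro hshad
    obtain ⟨𝓕₀, hXeq⟩ := hX
    obtain ⟨δ, hδ, hsh⟩ := hshad 1 one_pos
    obtain ⟨k, hk⟩ := exists_zpow_lt hδ
    set N := k + 1 with hNdef
    set 𝓕 : Set (ℕ × (Word ι → A)) :=
      {p | p.1 = N ∧ (∀ v : Word ι, ¬ wlen v < N → p.2 v = a₀) ∧
        ¬ ∃ z ∈ X, ∀ v : Word ι, wlen v < N → z v = p.2 v} with h𝓕def
    have hfin : 𝓕.Finite := by
      have hW : Finite {v : Word ι // wlen v < N} := by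
        have hl : Finite ↥{l : List S | l.length < N} := (List.finite_length_lt S N).to_subtype
        refine Finite.of_injective
          (fun v : {v : Word ι // wlen v < N} =>
            (⟨v.1.1, v.2⟩ : {l : List S | l.length < N})) ?_
        intro v₁ v₂ hv
        exact Subtype.ext (Subtype.ext (Subtype.mk_eq_mk.mp hv))
      have hBfin : {B : Word ι → A | ∀ v : Word ι, ¬ wlen v < N → B v = a₀}.Finite := by
        rw [← Set.finite_coe_iff]
        refine Finite.of_injective
          (fun B : {B : Word ι → A | ∀ v : Word ι, ¬ wlen v < N → B v = a₀} =>
            fun v : {v : Word ι // wlen v < N} => B.1 v.1) ?_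
        intro B₁ B₂ hBB
        apply Subtype.ext
        funext v
        by_cases hv : wlen v < N
        · exact congrFun hBB ⟨v, hv⟩
        · rw [B₁.2 v hv, B₂.2 v hv]
      apply Set.Finite.subset (hBfin.image (fun B => (N, B)))
      rintro p ⟨hp1, hp2, -⟩
      exact ⟨p.2, hp2, by rw [← hp1]⟩
    refine ⟨𝓕, hfin, ?_⟩
    ext x
    constructor
    · intro hxX
      rintro p ⟨hp1, -, hp3⟩ ⟨u, hu⟩
      refine hp3 ⟨shiftBy u.1 x, ?_, fun v hv => hu v (by rw [hp1]; exact hv)⟩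
      rw [hXeq] at hxX ⊢
      exact shiftBy_mem_shiftOf hι hxX u
    · intro hxF
      have hall : ∀ u : Word ι, ∃ z ∈ X, ∀ v : Word ι, wlen v < N → z v = shiftBy u.1 x v := by
        intro u
        by_contra hc
        refine hxF (N, fun v => if wlen v < N then shiftBy u.1 x v else a₀)
          ⟨rfl, fun v hv => if_neg hv, ?_⟩ ⟨u, fun v hv => (if_pos hv).symm⟩
        rintro ⟨z, hz, hzB⟩
        exact hc ⟨z, hz, fun v hv => (hzB v hv).trans (if_pos hv)⟩
      choose 𝒪 h𝒪X h𝒪 using hall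
      have hpo : ∀ (u : Word ι) (i : S),
          shiftDist (shiftBy [i] (𝒪 u)) (𝒪 (wordMul u (word1 ι i))) < δ := by
        intro u i
        refine lt_of_le_of_lt (shiftDist_le (n := k) fun v hv => ?_) hk
        have hvN : wlen (wmul [i] v) < N := by
          have hcl := length_consRed (ι := ι) i v.1
          show (consRed ι i v.1).length < N
          have h6 : wlen v = v.1.length := rfl
          have h7 : wlen v < k := hv
          omega
        have e1 : shiftBy [i] (𝒪 u) v = 𝒪 u (wmul [i] v) := rfl
        rw [e1, h𝒪 u (wmul [i] v) hvN, h𝒪 (wordMul u (word1 ι i)) v (by omega)]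
        show x (wmul u.1 (wmul [i] v)) = x (wmul (wordMul u (word1 ι i)).1 v)
        congr 1
        exact Subtype.ext (mulRed_assoc hι (List.isChain_singleton i) v.2 u.1).symm
      obtain ⟨y, hyX, hy⟩ := hsh 𝒪 h𝒪X hpo
      have hyx : y = x := by
        funext u
        have h0 : shiftDist (shiftBy u.1 y) (𝒪 u) < (2 : ℝ) ^ (-((0 : ℕ) : ℤ)) := by
          rw [show (-((0 : ℕ) : ℤ)) = 0 from rfl, zpow_zero]
          exact hy u
        have heq := shiftDist_lt_elim h0 (emptyWord ι) (le_refl 0)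
        have e2 : shiftBy u.1 y (emptyWord ι) = y u := by
          show y (wmul u.1 (emptyWord ι)) = y u
          rw [wmul_nil]
        have e3 : 𝒪 u (emptyWord ι) = x u := by
          have h5 : wlen (emptyWord ι (S := S)) < N := by
            show (0 : ℕ) < N
            omega
          rw [h𝒪 u (emptyWord ι) h5]
          show x (wmul u.1 (emptyWord ι)) = x u
          rw [wmul_nil]
        rw [← e2, heq, e3]
      exact hyx ▸ hyX
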